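/- Let b: ℓ̃ → [1,∞) be a monoid homomorphism from the free monoid ℓ̃ on ℕ to the multiplicative reals, and for p ∈ ℕ define ‖f‖_p² = ∑_{α∈ℓ̃} |f_α|² b_α^{-p}. Suppose C² := ∑_{α∈ℓ̃} b_α^{-(q-p)} < ∞. Then for all f with ‖f‖_p < ∞ and g with ‖g‖_q < ∞, the monoid convolution f ⊗ g satisfies ‖f ⊗ g‖_q ≤ C ‖f‖_p ‖g‖_q. -/

import Mathlib

/-- The Wick product (monoid convolution) on the free monoid on ℕ:
`(f ⊗ g)_γ = ∑_{αβ = γ} f_α g_β`. -/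
noncomputable def wick (f g : FreeMonoid ℕ → ℂ) (γ : FreeMonoid ℕ) : ℂ :=
  ∑ j ∈ Finset.range ((FreeMonoid.toList γ).length + 1),
    f (FreeMonoid.ofList ((FreeMonoid.toList γ).take j)) *
      g (FreeMonoid.ofList ((FreeMonoid.toList γ).drop j))

/-- Splitting a word into (prefix, suffix) pairs is a bijection. -/
def splitEquiv :
    (Σ γ : FreeMonoid ℕ, Fin ((FreeMonoid.toList γ).length + 1)) ≃
      (FreeMonoid ℕ × FreeMonoid ℕ) where
  toFun x := (FreeMonoid.ofList ((FreeMonoid.toList x.1).take x.2),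
    FreeMonoid.ofList ((FreeMonoid.toList x.1).drop x.2))
  invFun y := ⟨y.1 * y.2, ⟨(FreeMonoid.toList y.1).length, by
    simp [FreeMonoid.toList_mul, Nat.lt_succ_iff]⟩⟩
  left_inv := by
    rintro ⟨γ, j, hj⟩
    have hj' : j ≤ (FreeMonoid.toList γ).length := Nat.lt_succ_iff.mp hj
    have h1 : FreeMonoid.ofList ((FreeMonoid.toList γ).take j) *
        FreeMonoid.ofList ((FreeMonoid.toList γ).drop j) = γ := by
      rw [← FreeMonoid.ofList_append, List.take_append_drop,
        FreeMonoid.ofList_toList]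
    dsimp only
    refine Sigma.ext h1 ?_
    rw [Fin.heq_ext_iff (congrArg (fun x => (FreeMonoid.toList x).length + 1) h1)]
    simp [FreeMonoid.toList_ofList, List.length_take, hj']
  right_inv := by
    rintro ⟨α, β⟩
    simp [FreeMonoid.toList_mul, List.take_left, List.drop_left,
      FreeMonoid.ofList_toList]

theorem vage_inequality (b : FreeMonoid ℕ → ℝ) (hb1 : ∀ α, 1 ≤ b α)
    (hbmul : ∀ α β, b (α * β) = b α * b β)
    (p q : ℤ) (hC : Summable (fun α : FreeMonoid ℕ => b α ^ (-(q - p))))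
    (f g : FreeMonoid ℕ → ℂ)
    (hf : Summable (fun α => ‖f α‖ ^ 2 * b α ^ (-p)))
    (hg : Summable (fun α => ‖g α‖ ^ 2 * b α ^ (-q))) :
    Summable (fun γ => ‖wick f g γ‖ ^ 2 * b γ ^ (-q)) ∧
      (∑' γ, ‖wick f g γ‖ ^ 2 * b γ ^ (-q)) ≤
        (∑' α : FreeMonoid ℕ, b α ^ (-(q - p))) *
          ((∑' α, ‖f α‖ ^ 2 * b α ^ (-p)) * ∑' α, ‖g α‖ ^ 2 * b α ^ (-q)) := by
  classical
  have hbpos : ∀ α, (0:ℝ) < b α := fun α => lt_of_lt_of_le one_pos (hb1 α)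
  set F : FreeMonoid ℕ → ℝ := fun α => ‖f α‖ ^ 2 * b α ^ (-p) with hF
  set G : FreeMonoid ℕ → ℝ := fun α => ‖g α‖ ^ 2 * b α ^ (-q) with hG
  set w : FreeMonoid ℕ → ℝ := fun α => b α ^ (-(q - p)) with hw
  have hFnn : ∀ α, 0 ≤ F α := fun α => by
    have := (zpow_pos (hbpos α) (-p)).le; positivity
  have hGnn : ∀ α, 0 ≤ G α := fun α => by
    have := (zpow_pos (hbpos α) (-q)).le; positivity
  have hwnn : ∀ α, 0 ≤ w α := fun α => (zpow_pos (hbpos α) _).le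
  set C2 : ℝ := ∑' α, w α with hC2
  have hC2nn : 0 ≤ C2 := tsum_nonneg hwnn
  -- the dominating function
  set inner : FreeMonoid ℕ → ℝ := fun γ =>
    ∑ j ∈ Finset.range ((FreeMonoid.toList γ).length + 1),
      F (FreeMonoid.ofList ((FreeMonoid.toList γ).take j)) *
        G (FreeMonoid.ofList ((FreeMonoid.toList γ).drop j)) with hinner
  -- pointwise bound
  have key : ∀ γ, ‖wick f g γ‖ ^ 2 * b γ ^ (-q) ≤ C2 * inner γ := by
    intro γ
    set n := (FreeMonoid.toList γ).length
    set t : ℕ → FreeMonoid ℕ := fun j => FreeMonoid.ofList ((FreeMonoid.toList γ).take j) with ht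
    set d : ℕ → FreeMonoid ℕ := fun j => FreeMonoid.ofList ((FreeMonoid.toList γ).drop j) with hd
    have htd : ∀ j, t j * d j = γ := fun j => by
      rw [ht, hd, ← FreeMonoid.ofList_append, List.take_append_drop,
        FreeMonoid.ofList_toList]
    -- step 1: triangle inequality
    have step1 : ‖wick f g γ‖ ≤ ∑ j ∈ Finset.range (n+1), ‖f (t j)‖ * ‖g (d j)‖ := by
      refine le_trans (norm_sum_le _ _) ?_
      exact Finset.sum_le_sum fun j _ => (norm_mul_le _ _)
    have step2 : ‖wick f g γ‖ ^ 2 ≤ (∑ j ∈ Finset.range (n+1), ‖f (t j)‖ * ‖g (d j)‖) ^ 2 :=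
      pow_le_pow_left₀ (norm_nonneg _) step1 2
    -- Cauchy–Schwarz with weights
    set u : ℕ → ℝ := fun j => Real.sqrt (w (t j)) with hu
    set v : ℕ → ℝ := fun j => Real.sqrt (b (t j) ^ (q - p)) * (‖f (t j)‖ * ‖g (d j)‖) with hv
    have huv : ∀ j, u j * v j = ‖f (t j)‖ * ‖g (d j)‖ := by
      intro j
      have hx : (0:ℝ) < b (t j) ^ (q - p) := zpow_pos (hbpos _) _
      have : u j * Real.sqrt (b (t j) ^ (q - p)) = 1 := by
        rw [hu, hw]
        simp only
        rw [← Real.sqrt_mul (zpow_pos (hbpos _) _).le, ← zpow_add₀ (hbpos (t j)).ne',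
          neg_add_cancel, zpow_zero, Real.sqrt_one]
      rw [hv, ← mul_assoc, this, one_mul]
    have cs : (∑ j ∈ Finset.range (n+1), ‖f (t j)‖ * ‖g (d j)‖) ^ 2 ≤
        (∑ j ∈ Finset.range (n+1), u j ^ 2) * ∑ j ∈ Finset.range (n+1), v j ^ 2 := by
      have := Finset.sum_mul_sq_le_sq_mul_sq (Finset.range (n+1)) u v
      simpa [huv] using this
    -- bound the weight sum by C2
    have hwsum : (∑ j ∈ Finset.range (n+1), u j ^ 2) ≤ C2 := by
      have hus : ∀ j, u j ^ 2 = w (t j) := fun j => Real.sq_sqrt (hwnn _)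
      have hinj : ∀ j₁ ∈ Finset.range (n+1), ∀ j₂ ∈ Finset.range (n+1),
          t j₁ = t j₂ → j₁ = j₂ := by
        intro j₁ h₁ j₂ h₂ h
        have h₁' := Nat.lt_succ_iff.mp (Finset.mem_range.mp h₁)
        have h₂' := Nat.lt_succ_iff.mp (Finset.mem_range.mp h₂)
        have := congrArg (fun x => (FreeMonoid.toList x).length) h
        simp [ht, FreeMonoid.toList_ofList, List.length_take, h₁', h₂',
          Nat.min_eq_left] at this
        rwa [Nat.min_eq_left h₁', Nat.min_eq_left h₂'] at this
      calc (∑ j ∈ Finset.range (n+1), u j ^ 2)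
          = ∑ j ∈ Finset.range (n+1), w (t j) := by simp [hus]
        _ = ∑ α ∈ (Finset.range (n+1)).image t, w α := (Finset.sum_image hinj).symm
        _ ≤ C2 := Summable.sum_le_tsum _ (fun α _ => hwnn α) hC
    -- compute v j ^ 2 * b γ ^ (-q)
    have hvterm : ∀ j, v j ^ 2 * b γ ^ (-q) = F (t j) * G (d j) := by
      intro j
      have hbt := hbpos (t j)
      have hbd := hbpos (d j)
      have hbγ : b γ = b (t j) * b (d j) := by rw [← htd j, hbmul]
      rw [hv, mul_pow, Real.sq_sqrt (zpow_pos hbt _).le, mul_pow, hbγ, mul_zpow]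
      rw [hF, hG]
      simp only
      have : b (t j) ^ (q - p) * b (t j) ^ (-q) = b (t j) ^ (-p) := by
        rw [← zpow_add₀ hbt.ne']; ring_nf
      ring_nf
      rw [← this]; ring
    have hbγq : (0:ℝ) ≤ b γ ^ (-q) := (zpow_pos (hbpos γ) _).le
    calc ‖wick f g γ‖ ^ 2 * b γ ^ (-q)
        ≤ ((∑ j ∈ Finset.range (n+1), u j ^ 2) * ∑ j ∈ Finset.range (n+1), v j ^ 2)
            * b γ ^ (-q) := mul_le_mul_of_nonneg_right (step2.trans cs) hbγq
      _ ≤ (C2 * ∑ j ∈ Finset.range (n+1), v j ^ 2) * b γ ^ (-q) := by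
            refine mul_le_mul_of_nonneg_right (mul_le_mul_of_nonneg_right hwsum ?_) hbγq
            exact Finset.sum_nonneg fun j _ => sq_nonneg _
      _ = C2 * inner γ := by
            rw [mul_assoc, Finset.sum_mul]
            congr 1
            exact Finset.sum_congr rfl fun j _ => hvterm j
  -- summability of the dominating function via the split bijection
  have hFG : Summable (fun y : FreeMonoid ℕ × FreeMonoid ℕ => F y.1 * G y.2) :=
    hf.mul_of_nonneg hg hFnn hGnn
  have hKsum : Summable (fun x : Σ γ : FreeMonoid ℕ, Fin ((FreeMonoid.toList γ).length + 1) =>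
      F (FreeMonoid.ofList ((FreeMonoid.toList x.1).take x.2)) *
        G (FreeMonoid.ofList ((FreeMonoid.toList x.1).drop x.2))) := by
    have := (splitEquiv.summable_iff (f := fun y : FreeMonoid ℕ × FreeMonoid ℕ =>
      F y.1 * G y.2)).mpr hFG
    exact this
  have hinner_eq : ∀ γ, inner γ = ∑' j : Fin ((FreeMonoid.toList γ).length + 1),
      F (FreeMonoid.ofList ((FreeMonoid.toList γ).take j)) *
        G (FreeMonoid.ofList ((FreeMonoid.toList γ).drop j)) := by
    intro γ
    rw [tsum_fintype, hinner]
    exact (Fin.sum_univ_eq_sum_range _ _).symm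
  have hinnerSumm : Summable inner := by
    have := hKsum.sigma
    refine this.congr fun γ => ?_
    exact (hinner_eq γ).symm
  have hsig : (∑' x : Σ γ : FreeMonoid ℕ, Fin ((FreeMonoid.toList γ).length + 1),
      F (FreeMonoid.ofList ((FreeMonoid.toList x.1).take x.2)) *
        G (FreeMonoid.ofList ((FreeMonoid.toList x.1).drop x.2))) =
      ∑' y : FreeMonoid ℕ × FreeMonoid ℕ, F y.1 * G y.2 :=
    splitEquiv.tsum_eq (fun y : FreeMonoid ℕ × FreeMonoid ℕ => F y.1 * G y.2)
  have hinner_tsum : ∑' γ, inner γ = (∑' α, F α) * ∑' α, G α := by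
    rw [Summable.tsum_mul_tsum hf hg hFG, ← hsig, Summable.tsum_sigma hKsum]
    exact tsum_congr fun γ => hinner_eq γ
  -- conclude
  have hdomSumm : Summable (fun γ => C2 * inner γ) := hinnerSumm.mul_left C2
  have hLHSnn : ∀ γ, 0 ≤ ‖wick f g γ‖ ^ 2 * b γ ^ (-q) := fun γ => by
    have := (zpow_pos (hbpos γ) (-q)).le; positivity
  have hSumm : Summable (fun γ => ‖wick f g γ‖ ^ 2 * b γ ^ (-q)) :=
    Summable.of_nonneg_of_le hLHSnn key hdomSumm
  refine ⟨hSumm, ?_⟩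
  calc (∑' γ, ‖wick f g γ‖ ^ 2 * b γ ^ (-q))
      ≤ ∑' γ, C2 * inner γ := Summable.tsum_le_tsum key hSumm hdomSumm
    _ = C2 * ((∑' α, F α) * ∑' α, G α) := by rw [tsum_mul_left, hinner_tsum]
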